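/- If a probability measure P on a separable Hadamard space is Wasserstein sticky on a set S, then P is sample sticky on S: for i.i.d. samples (X_i) from P with empirical measures P_n, almost surely there is a random N such that b(P_n) ∈ S for all n ≥ N. -/

import Mathlib

open MeasureTheory ProbabilityTheory Filter Set
open scoped ENNReal NNReal Topology

class HadamardSpace (M : Type*) [MetricSpace M] : Prop where
  complete : CompleteSpace M
  npc : ∀ x y : M, ∃ m : M, ∀ z : M,
    dist z m ^ 2 ≤ dist z x ^ 2 / 2 + dist z y ^ 2 / 2 - dist x y ^ 2 / 4

noncomputable def W1 {M : Type*} [MetricSpace M] [MeasurableSpace M]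
    (P Q : Measure M) : ℝ :=
  sInf { r : ℝ | ∃ cpl : Measure (M × M), IsProbabilityMeasure cpl ∧
    cpl.map Prod.fst = P ∧ cpl.map Prod.snd = Q ∧ r = ∫ p, dist p.1 p.2 ∂cpl }

noncomputable def empiricalMeasure {M : Type*} [MeasurableSpace M] {Ω : Type*}
    (X : ℕ → Ω → M) (n : ℕ) (ω : Ω) : Measure M :=
  ((n : ENNReal)⁻¹) • ∑ i ∈ Finset.range n, Measure.dirac (X i ω)


section Aux

variable {M : Type*} [MetricSpace M] [MeasurableSpace M] [BorelSpace M]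

lemma integral_dist_eq_toReal [SecondCountableTopology M] (cpl : Measure (M × M)) :
    ∫ p, dist p.1 p.2 ∂cpl = (∫⁻ p, edist p.1 p.2 ∂cpl).toReal := by
  have hm : Measurable fun p : M × M => dist p.1 p.2 :=
    (continuous_fst.dist continuous_snd).measurable
  have hed : ∀ p : M × M, edist p.1 p.2 = ENNReal.ofReal (dist p.1 p.2) := fun p => edist_dist _ _
  rcases lt_or_ge (∫⁻ p, edist p.1 p.2 ∂cpl) ∞ with h | h
  · rw [integral_eq_lintegral_of_nonneg_ae (Filter.Eventually.of_forall fun p => dist_nonneg)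
      hm.aestronglyMeasurable]
    congr 1
    exact lintegral_congr fun p => (hed p).symm
  · have hni : ¬ Integrable (fun p : M × M => dist p.1 p.2) cpl := by
      intro hint
      have := hint.2
      rw [HasFiniteIntegral] at this
      have heq : ∫⁻ p, ‖dist p.1 p.2‖ₑ ∂cpl = ∫⁻ p, edist p.1 p.2 ∂cpl :=
        lintegral_congr fun p => by rw [hed p, Real.enorm_eq_ofReal dist_nonneg]
      rw [heq] at this
      exact absurd this (not_lt.2 h)
    rw [integral_undef hni, top_le_iff.1 h, ENNReal.toReal_top]

lemma W1_le_of_coupling (P Q : Measure M) [SecondCountableTopology M]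
    (cpl : Measure (M × M)) (h1 : IsProbabilityMeasure cpl)
    (h2 : cpl.map Prod.fst = P) (h3 : cpl.map Prod.snd = Q) :
    W1 P Q ≤ (∫⁻ p, edist p.1 p.2 ∂cpl).toReal := by
  rw [← integral_dist_eq_toReal]
  apply csInf_le
  · refine ⟨0, fun r hr => ?_⟩
    obtain ⟨c, _, _, _, rfl⟩ := hr
    exact integral_nonneg fun p => dist_nonneg
  · exact ⟨cpl, h1, h2, h3, rfl⟩

end Aux

set_option linter.unusedSectionVars false

section Cells

variable {M : Type*} [MetricSpace M] [MeasurableSpace M] [BorelSpace M]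

def cellC (q : ℕ → M) (δ : ℝ) (j : ℕ) : Set M :=
  Metric.ball (q j) δ \ ⋃ i < j, Metric.ball (q i) δ

def bigU (q : ℕ → M) (δ : ℝ) (J : ℕ) : Set M := ⋃ j < J, Metric.ball (q j) δ

variable {q : ℕ → M} {δ : ℝ} {j J : ℕ}

lemma cellC_subset : cellC q δ j ⊆ Metric.ball (q j) δ := diff_subset

lemma measurableSet_cellC : MeasurableSet (cellC q δ j) :=
  measurableSet_ball.diff (MeasurableSet.biUnion (to_countable _)
    fun _ _ => measurableSet_ball)

lemma measurableSet_bigU : MeasurableSet (bigU q δ J) :=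
  MeasurableSet.biUnion (to_countable _) fun _ _ => measurableSet_ball

lemma cellC_disjoint (h : i ≠ j) : Disjoint (cellC q δ i) (cellC q δ j) := by
  rcases h.lt_or_gt with hlt | hlt
  · refine Set.disjoint_left.2 fun x hxi hxj => ?_
    exact hxj.2 (Set.mem_biUnion hlt hxi.1)
  · refine Set.disjoint_left.2 fun x hxi hxj => ?_
    exact hxi.2 (Set.mem_biUnion hlt hxj.1)

lemma biUnion_cellC : (⋃ j ∈ Finset.range J, cellC q δ j) = bigU q δ J := by
  apply Set.Subset.antisymm
  · refine Set.iUnion₂_subset fun j hj => ?_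
    intro x hx
    exact Set.mem_biUnion (Finset.mem_range.1 hj) (cellC_subset hx)
  · intro x hx
    rcases Set.mem_iUnion₂.1 hx with ⟨j0, hj0, hxj0⟩
    have hex : ∃ j, j < J ∧ x ∈ Metric.ball (q j) δ := ⟨j0, hj0, hxj0⟩
    classical
    let k := Nat.find hex
    have hk := Nat.find_spec hex
    refine Set.mem_iUnion₂.2 ⟨k, Finset.mem_range.2 hk.1, hk.2, ?_⟩
    intro hmem
    rcases Set.mem_iUnion₂.1 hmem with ⟨i, hij, hxi⟩
    exact Nat.find_min hex (lt_of_lt_of_le hij (le_refl _)) ⟨lt_trans hij hk.1, hxi⟩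

lemma sum_restrict_cellC (μ : Measure M) :
    ∑ j ∈ Finset.range J, μ.restrict (cellC q δ j) = μ.restrict (bigU q δ J) := by
  ext s hs
  rw [MeasureTheory.Measure.finset_sum_apply, MeasureTheory.Measure.restrict_apply hs]
  have h1 : ∀ j ∈ Finset.range J, μ.restrict (cellC q δ j) s = μ (s ∩ cellC q δ j) :=
    fun j _ => MeasureTheory.Measure.restrict_apply hs
  rw [Finset.sum_congr rfl h1]
  have h2 : μ (⋃ j ∈ Finset.range J, s ∩ cellC q δ j)
      = ∑ j ∈ Finset.range J, μ (s ∩ cellC q δ j) := by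
    apply measure_biUnion_finset
    · intro i hi j hj hij
      exact (cellC_disjoint hij).mono inter_subset_right inter_subset_right
    · exact fun j _ => hs.inter measurableSet_cellC
  rw [← h2, ← Set.inter_iUnion₂, ← biUnion_cellC]

end Cells

section Coupling

variable {M : Type*} [MetricSpace M] [MeasurableSpace M] [BorelSpace M]
  [SecondCountableTopology M]

lemma ennreal_cancel_of_le {z w : ℝ≥0∞} (hw : w ≠ ∞) (hz : z ≤ w) : z / w * w = z := by
  rcases eq_or_ne w 0 with rfl | hw0
  · simp [le_zero_iff.1 hz]
  · exact ENNReal.div_mul_cancel hw0 hw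

lemma ennreal_div_mul_le (z w : ℝ≥0∞) : z / w * w ≤ z := by
  rcases eq_or_ne w 0 with rfl | hw0
  · simp
  · rcases eq_or_ne w ∞ with rfl | hwt
    · simp [ENNReal.div_top]
    · rw [ENNReal.div_mul_cancel hw0 hwt]

lemma ennreal_inv_mul_le_one (w : ℝ≥0∞) : w⁻¹ * w ≤ 1 := by
  rcases eq_or_ne w 0 with rfl | hw0
  · simp
  · rcases eq_or_ne w ∞ with rfl | hwt
    · simp
    · rw [ENNReal.inv_mul_cancel hw0 hwt]

lemma map_finset_sum_measure {α β : Type*} [MeasurableSpace α] [MeasurableSpace β]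
    {ι : Type*} (s : Finset ι) (μ : ι → Measure α) {f : α → β} (hf : Measurable f) :
    (∑ i ∈ s, μ i).map f = ∑ i ∈ s, (μ i).map f := by
  classical
  induction s using Finset.induction_on with
  | empty => simp
  | insert _ _ hnotmem ih =>
    rw [Finset.sum_insert hnotmem, Finset.sum_insert hnotmem,
      MeasureTheory.Measure.map_add _ _ hf, ih]

lemma coupling_W1_bound (P ν : Measure M) [IsProbabilityMeasure P] [IsProbabilityMeasure ν]
    (x₀ : M) (q : ℕ → M) {δ : ℝ} (hδ : 0 < δ) (J : ℕ) {c : ℝ} (hc : 0 ≤ c)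
    (hbound : ENNReal.ofReal (2 * δ)
      + 2 * (ENNReal.ofReal (δ + ∑ j ∈ Finset.range J, dist (q j) x₀)
          * ∑ j ∈ Finset.range J, ((P (cellC q δ j) - ν (cellC q δ j))
              + (ν (cellC q δ j) - P (cellC q δ j))))
      + (∫⁻ x in (bigU q δ J)ᶜ, edist x x₀ ∂P) + (∫⁻ y in (bigU q δ J)ᶜ, edist x₀ y ∂ν)
      ≤ ENNReal.ofReal c) :
    W1 P ν ≤ c := by
  classical
  set C : ℕ → Set M := cellC q δ with hC
  set U : Set M := bigU q δ J with hU
  set a : ℕ → ℝ≥0∞ := fun j => P (C j) with ha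
  set bb : ℕ → ℝ≥0∞ := fun j => ν (C j) with hbb
  set m : ℕ → ℝ≥0∞ := fun j => min (a j) (bb j) with hm
  have hafin : ∀ j, a j ≠ ∞ := fun j => measure_ne_top _ _
  have hbfin : ∀ j, bb j ≠ ∞ := fun j => measure_ne_top _ _
  have hma : ∀ j, m j ≤ a j := fun j => min_le_left _ _
  have hmb : ∀ j, m j ≤ bb j := fun j => min_le_right _ _
  set PJ : ℕ → Measure M := fun j => P.restrict (C j) with hPJ
  set νJ : ℕ → Measure M := fun j => ν.restrict (C j) with hνJ
  set matched : Measure (M × M) :=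
    ∑ j ∈ Finset.range J, (m j / (a j * bb j)) • ((PJ j).prod (νJ j)) with hmatched
  set μ' : Measure M :=
    (∑ j ∈ Finset.range J, ((a j - m j) / a j) • PJ j) + P.restrict Uᶜ with hμ'
  set ν' : Measure M :=
    (∑ j ∈ Finset.range J, ((bb j - m j) / bb j) • νJ j) + ν.restrict Uᶜ with hν'
  set mm : ℝ≥0∞ := 1 - ∑ j ∈ Finset.range J, m j with hmm
  -- sums of masses
  have hPU : P U = ∑ j ∈ Finset.range J, a j := by
    have := congrArg (fun μ : Measure M => μ univ) (sum_restrict_cellC (q := q) (δ := δ) (J := J) P)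
    simpa [MeasureTheory.Measure.finset_sum_apply] using this.symm
  have hνU : ν U = ∑ j ∈ Finset.range J, bb j := by
    have := congrArg (fun μ : Measure M => μ univ) (sum_restrict_cellC (q := q) (δ := δ) (J := J) ν)
    simpa [MeasureTheory.Measure.finset_sum_apply] using this.symm
  have hsm_le_one : ∑ j ∈ Finset.range J, m j ≤ 1 := by
    calc ∑ j ∈ Finset.range J, m j ≤ ∑ j ∈ Finset.range J, a j :=
          Finset.sum_le_sum fun j _ => hma j
      _ = P U := hPU.symm
      _ ≤ 1 := prob_le_one
  have hsm_ne_top : ∑ j ∈ Finset.range J, m j ≠ ∞ :=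
    ne_top_of_le_ne_top ENNReal.one_ne_top hsm_le_one
  have hmm_ne_top : mm ≠ ∞ := ne_top_of_le_ne_top ENNReal.one_ne_top tsub_le_self
  -- total masses of μ' and ν'
  have hμ'univ : μ' univ = mm := by
    have hterm : ∀ j ∈ Finset.range J, (((a j - m j) / a j) • PJ j) univ = a j - m j := by
      intro j _
      rw [MeasureTheory.Measure.smul_apply, hPJ]
      simp only [MeasureTheory.Measure.restrict_apply_univ]
      rw [smul_eq_mul]
      exact ennreal_cancel_of_le (hafin j) tsub_le_self
    have heq : μ' univ = (∑ j ∈ Finset.range J, (a j - m j)) + P Uᶜ := by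
      rw [hμ', MeasureTheory.Measure.add_apply, MeasureTheory.Measure.finset_sum_apply,
        Finset.sum_congr rfl hterm, MeasureTheory.Measure.restrict_apply_univ]
    rw [heq]
    have hkey : ((∑ j ∈ Finset.range J, (a j - m j)) + P Uᶜ) + ∑ j ∈ Finset.range J, m j = 1 := by
      have h1 : (∑ j ∈ Finset.range J, (a j - m j)) + ∑ j ∈ Finset.range J, m j
          = ∑ j ∈ Finset.range J, a j := by
        rw [← Finset.sum_add_distrib]
        exact Finset.sum_congr rfl fun j _ => tsub_add_cancel_of_le (hma j)
      calc ((∑ j ∈ Finset.range J, (a j - m j)) + P Uᶜ) + ∑ j ∈ Finset.range J, m j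
          = ((∑ j ∈ Finset.range J, (a j - m j)) + ∑ j ∈ Finset.range J, m j) + P Uᶜ := by ring
        _ = (∑ j ∈ Finset.range J, a j) + P Uᶜ := by rw [h1]
        _ = P U + P Uᶜ := by rw [hPU]
        _ = 1 := by rw [measure_add_measure_compl measurableSet_bigU, measure_univ]
    exact ENNReal.eq_sub_of_add_eq hsm_ne_top hkey
  have hν'univ : ν' univ = mm := by
    have hterm : ∀ j ∈ Finset.range J, (((bb j - m j) / bb j) • νJ j) univ = bb j - m j := by
      intro j _
      rw [MeasureTheory.Measure.smul_apply, hνJ]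
      simp only [MeasureTheory.Measure.restrict_apply_univ]
      rw [smul_eq_mul]
      exact ennreal_cancel_of_le (hbfin j) tsub_le_self
    have heq : ν' univ = (∑ j ∈ Finset.range J, (bb j - m j)) + ν Uᶜ := by
      rw [hν', MeasureTheory.Measure.add_apply, MeasureTheory.Measure.finset_sum_apply,
        Finset.sum_congr rfl hterm, MeasureTheory.Measure.restrict_apply_univ]
    rw [heq]
    have hkey : ((∑ j ∈ Finset.range J, (bb j - m j)) + ν Uᶜ) + ∑ j ∈ Finset.range J, m j = 1 := by
      have h1 : (∑ j ∈ Finset.range J, (bb j - m j)) + ∑ j ∈ Finset.range J, m j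
          = ∑ j ∈ Finset.range J, bb j := by
        rw [← Finset.sum_add_distrib]
        exact Finset.sum_congr rfl fun j _ => tsub_add_cancel_of_le (hmb j)
      calc ((∑ j ∈ Finset.range J, (bb j - m j)) + ν Uᶜ) + ∑ j ∈ Finset.range J, m j
          = ((∑ j ∈ Finset.range J, (bb j - m j)) + ∑ j ∈ Finset.range J, m j) + ν Uᶜ := by ring
        _ = (∑ j ∈ Finset.range J, bb j) + ν Uᶜ := by rw [h1]
        _ = ν U + ν Uᶜ := by rw [hνU]
        _ = 1 := by rw [measure_add_measure_compl measurableSet_bigU, measure_univ]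
    exact ENNReal.eq_sub_of_add_eq hsm_ne_top hkey
  haveI hμ'fin : IsFiniteMeasure μ' :=
    ⟨by rw [hμ'univ]; exact lt_of_le_of_lt tsub_le_self ENNReal.one_lt_top⟩
  haveI hν'fin : IsFiniteMeasure ν' :=
    ⟨by rw [hν'univ]; exact lt_of_le_of_lt tsub_le_self ENNReal.one_lt_top⟩
  set cpl : Measure (M × M) := matched + mm⁻¹ • (μ'.prod ν') with hcpl
  -- coefficient identities
  have hco1 : ∀ j, m j / (a j * bb j) * bb j = m j / a j := by
    intro j
    rcases eq_or_ne (bb j) 0 with hb0 | hb0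
    · have hmj : m j = 0 := le_zero_iff.1 (hb0 ▸ hmb j)
      simp [hmj, hb0]
    · rcases eq_or_ne (a j) 0 with ha0 | ha0
      · have hmj : m j = 0 := le_zero_iff.1 (ha0 ▸ hma j)
        simp [hmj]
      · rw [div_eq_mul_inv, ENNReal.mul_inv (Or.inl ha0) (Or.inl (hafin j)),
          mul_assoc (m j), mul_assoc (a j)⁻¹, ENNReal.inv_mul_cancel hb0 (hbfin j),
          mul_one, ← div_eq_mul_inv]
  have hco2 : ∀ j, m j / (a j * bb j) * a j = m j / bb j := by
    intro j
    rcases eq_or_ne (a j) 0 with ha0 | ha0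
    · have hmj : m j = 0 := le_zero_iff.1 (ha0 ▸ hma j)
      simp [hmj, ha0]
    · rcases eq_or_ne (bb j) 0 with hb0 | hb0
      · have hmj : m j = 0 := le_zero_iff.1 (hb0 ▸ hmb j)
        simp [hmj]
      · rw [div_eq_mul_inv, ENNReal.mul_inv (Or.inl ha0) (Or.inl (hafin j)),
          mul_comm (a j)⁻¹ (bb j)⁻¹, mul_assoc (m j), mul_assoc (bb j)⁻¹,
          ENNReal.inv_mul_cancel ha0 (hafin j), mul_one, ← div_eq_mul_inv]
  have hdivself : ∀ (ρ : Measure M) (s : Set M), ρ s ≠ ∞ →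
      (ρ s / ρ s) • ρ.restrict s = ρ.restrict s := by
    intro ρ s hfin
    rcases eq_or_ne (ρ s) 0 with h0 | h0
    · rw [MeasureTheory.Measure.restrict_eq_zero.2 h0, smul_zero]
    · rw [ENNReal.div_self h0 hfin, one_smul]
  have hmminv : (mm⁻¹ * mm) • μ' = μ' := by
    rcases eq_or_ne mm 0 with h0 | h0
    · have : μ' = 0 := MeasureTheory.Measure.measure_univ_eq_zero.1 (by rw [hμ'univ, h0])
      rw [this, smul_zero]
    · rw [ENNReal.inv_mul_cancel h0 hmm_ne_top, one_smul]
  have hmminv' : (mm⁻¹ * mm) • ν' = ν' := by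
    rcases eq_or_ne mm 0 with h0 | h0
    · have : ν' = 0 := MeasureTheory.Measure.measure_univ_eq_zero.1 (by rw [hν'univ, h0])
      rw [this, smul_zero]
    · rw [ENNReal.inv_mul_cancel h0 hmm_ne_top, one_smul]
  -- first marginal
  have hfst : cpl.map Prod.fst = P := by
    rw [hcpl, MeasureTheory.Measure.map_add _ _ measurable_fst, hmatched,
      map_finset_sum_measure _ _ measurable_fst]
    have hterm : ∀ j ∈ Finset.range J,
        ((m j / (a j * bb j)) • ((PJ j).prod (νJ j))).map Prod.fst = (m j / a j) • PJ j := by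
      intro j _
      rw [MeasureTheory.Measure.map_smul, MeasureTheory.Measure.map_fst_prod]
      have : νJ j univ = bb j := MeasureTheory.Measure.restrict_apply_univ _
      rw [this, smul_smul, hco1 j]
    rw [Finset.sum_congr rfl hterm, MeasureTheory.Measure.map_smul,
      MeasureTheory.Measure.map_fst_prod, hν'univ, smul_smul, hmminv, hμ']
    rw [← add_assoc, ← Finset.sum_add_distrib]
    have hterm2 : ∀ j ∈ Finset.range J,
        (m j / a j) • PJ j + ((a j - m j) / a j) • PJ j = PJ j := by
      intro j _
      rw [← add_smul, ENNReal.div_add_div_same, add_tsub_cancel_of_le (hma j)]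
      exact hdivself P (C j) (measure_ne_top _ _)
    rw [Finset.sum_congr rfl hterm2, sum_restrict_cellC,
      MeasureTheory.Measure.restrict_add_restrict_compl measurableSet_bigU]
  -- second marginal
  have hsnd : cpl.map Prod.snd = ν := by
    rw [hcpl, MeasureTheory.Measure.map_add _ _ measurable_snd, hmatched,
      map_finset_sum_measure _ _ measurable_snd]
    have hterm : ∀ j ∈ Finset.range J,
        ((m j / (a j * bb j)) • ((PJ j).prod (νJ j))).map Prod.snd = (m j / bb j) • νJ j := by
      intro j _
      rw [MeasureTheory.Measure.map_smul, MeasureTheory.Measure.map_snd_prod]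
      have : PJ j univ = a j := MeasureTheory.Measure.restrict_apply_univ _
      rw [this, smul_smul, hco2 j]
    rw [Finset.sum_congr rfl hterm, MeasureTheory.Measure.map_smul,
      MeasureTheory.Measure.map_snd_prod, hμ'univ, smul_smul, hmminv', hν']
    rw [← add_assoc, ← Finset.sum_add_distrib]
    have hterm2 : ∀ j ∈ Finset.range J,
        (m j / bb j) • νJ j + ((bb j - m j) / bb j) • νJ j = νJ j := by
      intro j _
      rw [← add_smul, ENNReal.div_add_div_same, add_tsub_cancel_of_le (hmb j)]
      exact hdivself ν (C j) (measure_ne_top _ _)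
    rw [Finset.sum_congr rfl hterm2, sum_restrict_cellC,
      MeasureTheory.Measure.restrict_add_restrict_compl measurableSet_bigU]
  haveI hcplprob : IsProbabilityMeasure cpl := by
    constructor
    have h1 : (cpl.map Prod.fst) univ = cpl univ := by
      rw [MeasureTheory.Measure.map_apply measurable_fst MeasurableSet.univ, Set.preimage_univ]
    rw [← h1, hfst, measure_univ]
  -- cost estimate
  set K : ℝ≥0∞ := ENNReal.ofReal (δ + ∑ j ∈ Finset.range J, dist (q j) x₀) with hK
  set d : ℕ → ℝ≥0∞ := fun j => (a j - bb j) + (bb j - a j) with hd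
  have hdistsum : ∀ j ∈ Finset.range J, dist (q j) x₀ ≤ ∑ i ∈ Finset.range J, dist (q i) x₀ :=
    fun j hj => Finset.single_le_sum (fun i _ => dist_nonneg) hj
  -- per-cell cost
  have hcell : ∀ j ∈ Finset.range J,
      ∫⁻ p, edist p.1 p.2 ∂((PJ j).prod (νJ j)) ≤ ENNReal.ofReal (2 * δ) * (a j * bb j) := by
    intro j _
    rw [hPJ, hνJ, MeasureTheory.Measure.prod_restrict]
    calc ∫⁻ p in C j ×ˢ C j, edist p.1 p.2 ∂(P.prod ν)
        ≤ ∫⁻ _ in C j ×ˢ C j, ENNReal.ofReal (2 * δ) ∂(P.prod ν) := by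
          apply setLIntegral_mono measurable_const
          rintro ⟨x, y⟩ ⟨hx, hy⟩
          have h1 : edist x y ≤ edist x (q j) + edist (q j) y := edist_triangle _ _ _
          have h2 : edist x (q j) ≤ ENNReal.ofReal δ := by
            rw [edist_dist]
            exact ENNReal.ofReal_le_ofReal (le_of_lt (Metric.mem_ball.1 (cellC_subset hx)))
          have h3 : edist (q j) y ≤ ENNReal.ofReal δ := by
            rw [edist_dist, dist_comm]
            exact ENNReal.ofReal_le_ofReal (le_of_lt (Metric.mem_ball.1 (cellC_subset hy)))
          calc edist x y ≤ ENNReal.ofReal δ + ENNReal.ofReal δ := le_trans h1 (add_le_add h2 h3)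
            _ = ENNReal.ofReal (2 * δ) := by
                rw [← ENNReal.ofReal_add hδ.le hδ.le, two_mul]
      _ = ENNReal.ofReal (2 * δ) * (P.prod ν) (C j ×ˢ C j) := setLIntegral_const _ _
      _ = ENNReal.ofReal (2 * δ) * (a j * bb j) := by
          rw [MeasureTheory.Measure.prod_prod]
  -- tail integrals bound for μ'
  have hcellK : ∀ j ∈ Finset.range J, ∫⁻ x in C j, edist x x₀ ∂P ≤ K * a j := by
    intro j hj
    calc ∫⁻ x in C j, edist x x₀ ∂P ≤ ∫⁻ _ in C j, K ∂P := by
          apply setLIntegral_mono measurable_const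
          intro x hx
          calc edist x x₀ ≤ edist x (q j) + edist (q j) x₀ := edist_triangle _ _ _
            _ ≤ ENNReal.ofReal δ + ENNReal.ofReal (dist (q j) x₀) := by
                apply add_le_add
                · rw [edist_dist]
                  exact ENNReal.ofReal_le_ofReal (le_of_lt (Metric.mem_ball.1 (cellC_subset hx)))
                · rw [edist_dist]
            _ = ENNReal.ofReal (δ + dist (q j) x₀) := by
                rw [← ENNReal.ofReal_add hδ.le dist_nonneg]
            _ ≤ K := ENNReal.ofReal_le_ofReal (by
                have := hdistsum j hj
                linarith)
      _ = K * a j := setLIntegral_const _ _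
  have hcellK' : ∀ j ∈ Finset.range J, ∫⁻ y in C j, edist x₀ y ∂ν ≤ K * bb j := by
    intro j hj
    calc ∫⁻ y in C j, edist x₀ y ∂ν ≤ ∫⁻ _ in C j, K ∂ν := by
          apply setLIntegral_mono measurable_const
          intro y hy
          calc edist x₀ y ≤ edist x₀ (q j) + edist (q j) y := edist_triangle _ _ _
            _ ≤ ENNReal.ofReal (dist (q j) x₀) + ENNReal.ofReal δ := by
                apply add_le_add
                · rw [edist_dist, dist_comm]
                · rw [edist_dist, dist_comm]
                  exact ENNReal.ofReal_le_ofReal (le_of_lt (Metric.mem_ball.1 (cellC_subset hy)))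
            _ = ENNReal.ofReal (dist (q j) x₀ + δ) := by
                rw [← ENNReal.ofReal_add dist_nonneg hδ.le]
            _ ≤ K := ENNReal.ofReal_le_ofReal (by
                have := hdistsum j hj
                linarith)
      _ = K * bb j := setLIntegral_const _ _
  have hsub_le_d : ∀ j, a j - m j ≤ d j := by
    intro j
    rcases le_total (a j) (bb j) with h | h
    · rw [hm]
      simp only [min_eq_left h, tsub_self]
      exact zero_le
    · rw [hm]
      simp only [min_eq_right h]
      exact le_trans le_rfl (le_add_right le_rfl)
  have hsub_le_d' : ∀ j, bb j - m j ≤ d j := by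
    intro j
    rcases le_total (bb j) (a j) with h | h
    · rw [hm]
      simp only [min_eq_right h, tsub_self]
      exact zero_le
    · rw [hm]
      simp only [min_eq_left h]
      exact le_add_left le_rfl
  have hI1 : ∫⁻ x, edist x x₀ ∂μ'
      ≤ K * (∑ j ∈ Finset.range J, d j) + ∫⁻ x in Uᶜ, edist x x₀ ∂P := by
    rw [hμ', lintegral_add_measure, lintegral_finset_sum_measure]
    apply add_le_add _ le_rfl
    calc ∑ j ∈ Finset.range J, ∫⁻ x, edist x x₀ ∂(((a j - m j) / a j) • PJ j)
        ≤ ∑ j ∈ Finset.range J, K * d j := by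
          apply Finset.sum_le_sum
          intro j hj
          rw [lintegral_smul_measure]
          calc ((a j - m j) / a j) * ∫⁻ x, edist x x₀ ∂(PJ j)
              ≤ ((a j - m j) / a j) * (K * a j) := by
                apply mul_le_mul_right (hcellK j hj)
            _ = K * (((a j - m j) / a j) * a j) := by ring
            _ = K * (a j - m j) := by rw [ennreal_cancel_of_le (hafin j) tsub_le_self]
            _ ≤ K * d j := mul_le_mul_right (hsub_le_d j) _
      _ = K * ∑ j ∈ Finset.range J, d j := by rw [Finset.mul_sum]
  have hI2 : ∫⁻ y, edist x₀ y ∂ν'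
      ≤ K * (∑ j ∈ Finset.range J, d j) + ∫⁻ y in Uᶜ, edist x₀ y ∂ν := by
    rw [hν', lintegral_add_measure, lintegral_finset_sum_measure]
    apply add_le_add _ le_rfl
    calc ∑ j ∈ Finset.range J, ∫⁻ y, edist x₀ y ∂(((bb j - m j) / bb j) • νJ j)
        ≤ ∑ j ∈ Finset.range J, K * d j := by
          apply Finset.sum_le_sum
          intro j hj
          rw [lintegral_smul_measure]
          calc ((bb j - m j) / bb j) * ∫⁻ y, edist x₀ y ∂(νJ j)
              ≤ ((bb j - m j) / bb j) * (K * bb j) := by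
                apply mul_le_mul_right (hcellK' j hj)
            _ = K * (((bb j - m j) / bb j) * bb j) := by ring
            _ = K * (bb j - m j) := by rw [ennreal_cancel_of_le (hbfin j) tsub_le_self]
            _ ≤ K * d j := mul_le_mul_right (hsub_le_d' j) _
      _ = K * ∑ j ∈ Finset.range J, d j := by rw [Finset.mul_sum]
  -- total cost
  have hg1 : Measurable fun p : M × M => edist p.1 x₀ :=
    (continuous_fst.edist continuous_const).measurable
  have hg2 : Measurable fun p : M × M => edist x₀ p.2 :=
    (continuous_const.edist continuous_snd).measurable
  have hleft : ∫⁻ p, edist p.1 p.2 ∂(μ'.prod ν')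
      ≤ mm * ((∫⁻ x, edist x x₀ ∂μ') + (∫⁻ y, edist x₀ y ∂ν')) := by
    calc ∫⁻ p, edist p.1 p.2 ∂(μ'.prod ν')
        ≤ ∫⁻ p, (edist p.1 x₀ + edist x₀ p.2) ∂(μ'.prod ν') :=
          lintegral_mono fun p => edist_triangle _ _ _
      _ = (∫⁻ p, edist p.1 x₀ ∂(μ'.prod ν')) + ∫⁻ p, edist x₀ p.2 ∂(μ'.prod ν') :=
          lintegral_add_left hg1 _
      _ = mm * (∫⁻ x, edist x x₀ ∂μ') + mm * (∫⁻ y, edist x₀ y ∂ν') := by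
          have hedx : Measurable fun x : M => edist x x₀ :=
            (continuous_id.edist continuous_const).measurable
          have hedy : Measurable fun y : M => edist x₀ y :=
            (continuous_const.edist continuous_id).measurable
          have h1 : ∫⁻ p, edist p.1 x₀ ∂(μ'.prod ν')
              = ∫⁻ x, edist x x₀ ∂((μ'.prod ν').map Prod.fst) := by
            rw [lintegral_map hedx measurable_fst]
          have h2 : ∫⁻ p, edist x₀ p.2 ∂(μ'.prod ν')
              = ∫⁻ y, edist x₀ y ∂((μ'.prod ν').map Prod.snd) := by
            rw [lintegral_map hedy measurable_snd]
          rw [h1, h2, MeasureTheory.Measure.map_fst_prod, MeasureTheory.Measure.map_snd_prod,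
            hν'univ, hμ'univ, lintegral_smul_measure, lintegral_smul_measure, smul_eq_mul, smul_eq_mul]
      _ = mm * ((∫⁻ x, edist x x₀ ∂μ') + (∫⁻ y, edist x₀ y ∂ν')) := by rw [mul_add]
  have hcost : ∫⁻ p, edist p.1 p.2 ∂cpl ≤ ENNReal.ofReal c := by
    have hL : ∫⁻ p, edist p.1 p.2 ∂cpl
        = (∑ j ∈ Finset.range J, (m j / (a j * bb j)) * ∫⁻ p, edist p.1 p.2 ∂((PJ j).prod (νJ j)))
          + mm⁻¹ * ∫⁻ p, edist p.1 p.2 ∂(μ'.prod ν') := by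
      rw [hcpl, lintegral_add_measure, hmatched, lintegral_finset_sum_measure,
        lintegral_smul_measure]
      congr 1
      exact Finset.sum_congr rfl fun j _ => lintegral_smul_measure _ _
    rw [hL]
    have hmatchedcost : ∑ j ∈ Finset.range J,
        (m j / (a j * bb j)) * ∫⁻ p, edist p.1 p.2 ∂((PJ j).prod (νJ j))
        ≤ ENNReal.ofReal (2 * δ) := by
      calc ∑ j ∈ Finset.range J, (m j / (a j * bb j)) * ∫⁻ p, edist p.1 p.2 ∂((PJ j).prod (νJ j))
          ≤ ∑ j ∈ Finset.range J, ENNReal.ofReal (2 * δ) * m j := by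
            apply Finset.sum_le_sum
            intro j hj
            calc (m j / (a j * bb j)) * ∫⁻ p, edist p.1 p.2 ∂((PJ j).prod (νJ j))
                ≤ (m j / (a j * bb j)) * (ENNReal.ofReal (2 * δ) * (a j * bb j)) :=
                  mul_le_mul_right (hcell j hj) _
              _ = ENNReal.ofReal (2 * δ) * ((m j / (a j * bb j)) * (a j * bb j)) := by ring
              _ ≤ ENNReal.ofReal (2 * δ) * m j :=
                  mul_le_mul_right (ennreal_div_mul_le _ _) _
        _ = ENNReal.ofReal (2 * δ) * ∑ j ∈ Finset.range J, m j := by rw [Finset.mul_sum]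
        _ ≤ ENNReal.ofReal (2 * δ) * 1 := mul_le_mul_right hsm_le_one _
        _ = ENNReal.ofReal (2 * δ) := mul_one _
    have hleftcost : mm⁻¹ * ∫⁻ p, edist p.1 p.2 ∂(μ'.prod ν')
        ≤ (K * (∑ j ∈ Finset.range J, d j) + ∫⁻ x in Uᶜ, edist x x₀ ∂P)
          + (K * (∑ j ∈ Finset.range J, d j) + ∫⁻ y in Uᶜ, edist x₀ y ∂ν) := by
      calc mm⁻¹ * ∫⁻ p, edist p.1 p.2 ∂(μ'.prod ν')
          ≤ mm⁻¹ * (mm * ((∫⁻ x, edist x x₀ ∂μ') + (∫⁻ y, edist x₀ y ∂ν'))) :=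
            mul_le_mul_right hleft _
        _ = (mm⁻¹ * mm) * ((∫⁻ x, edist x x₀ ∂μ') + (∫⁻ y, edist x₀ y ∂ν')) := by ring
        _ ≤ 1 * ((∫⁻ x, edist x x₀ ∂μ') + (∫⁻ y, edist x₀ y ∂ν')) :=
            mul_le_mul_left (ennreal_inv_mul_le_one mm) _
        _ = (∫⁻ x, edist x x₀ ∂μ') + (∫⁻ y, edist x₀ y ∂ν') := one_mul _
        _ ≤ _ := add_le_add hI1 hI2
    calc (∑ j ∈ Finset.range J, (m j / (a j * bb j)) * ∫⁻ p, edist p.1 p.2 ∂((PJ j).prod (νJ j)))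
          + mm⁻¹ * ∫⁻ p, edist p.1 p.2 ∂(μ'.prod ν')
        ≤ ENNReal.ofReal (2 * δ)
          + ((K * (∑ j ∈ Finset.range J, d j) + ∫⁻ x in Uᶜ, edist x x₀ ∂P)
            + (K * (∑ j ∈ Finset.range J, d j) + ∫⁻ y in Uᶜ, edist x₀ y ∂ν)) :=
          add_le_add hmatchedcost hleftcost
      _ = ENNReal.ofReal (2 * δ) + 2 * (K * ∑ j ∈ Finset.range J, d j)
          + (∫⁻ x in Uᶜ, edist x x₀ ∂P) + ∫⁻ y in Uᶜ, edist x₀ y ∂ν := by ring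
      _ ≤ ENNReal.ofReal c := hbound
  calc W1 P ν ≤ (∫⁻ p, edist p.1 p.2 ∂cpl).toReal :=
        W1_le_of_coupling P ν cpl hcplprob hfst hsnd
    _ ≤ c := ENNReal.toReal_le_of_le_ofReal hc hcost

end Coupling

section SLLN

lemma slln_comp {Ω : Type*} [MeasureSpace Ω] [IsProbabilityMeasure (ℙ : Measure Ω)]
    {M : Type*} [MeasurableSpace M] (X : ℕ → Ω → M) (hmeas : ∀ i, Measurable (X i))
    (hindep : iIndepFun X ℙ)
    (P : Measure M) (hlaw : ∀ i, Measure.map (X i) ℙ = P)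
    (f : M → ℝ) (hf : Measurable f) (hint : Integrable f P) :
    ∀ᵐ ω ∂ℙ, Tendsto (fun n : ℕ => (n : ℝ)⁻¹ • ∑ i ∈ Finset.range n, f (X i ω)) atTop
      (𝓝 (∫ x, f x ∂P)) := by
  have h0 : Integrable (fun ω => f (X 0 ω)) ℙ := by
    have := hint
    rw [← hlaw 0] at this
    exact (integrable_map_measure hf.aestronglyMeasurable (hmeas 0).aemeasurable).1 this
  have hid : ∀ i, IdentDistrib (fun ω => f (X i ω)) (fun ω => f (X 0 ω)) ℙ ℙ := by
    intro i
    have hXid : IdentDistrib (X i) (X 0) ℙ ℙ :=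
      ⟨(hmeas i).aemeasurable, (hmeas 0).aemeasurable, by rw [hlaw i, hlaw 0]⟩
    exact hXid.comp hf
  have hpair : Pairwise (Function.onFun (IndepFun · · ℙ) fun i ω => f (X i ω)) := by
    intro i j hij
    exact (hindep.indepFun hij).comp hf hf
  have hslln := strong_law_ae (fun i ω => f (X i ω)) h0 hpair hid
  have hexp : (∫ ω, f (X 0 ω) ∂ℙ) = ∫ x, f x ∂P := by
    rw [← hlaw 0, integral_map (hmeas 0).aemeasurable hf.aestronglyMeasurable]
  rw [hexp] at hslln
  exact hslln

lemma lintegral_empirical {Ω : Type*} {M : Type*} [MeasurableSpace M]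
    (X : ℕ → Ω → M) (n : ℕ) (ω : Ω) (g : M → ℝ≥0∞) (hg : Measurable g) :
    ∫⁻ y, g y ∂(empiricalMeasure X n ω)
      = (n : ℝ≥0∞)⁻¹ * ∑ i ∈ Finset.range n, g (X i ω) := by
  rw [empiricalMeasure, lintegral_smul_measure, lintegral_finset_sum_measure]
  congr 1
  exact Finset.sum_congr rfl fun i _ => lintegral_dirac' _ hg

lemma lintegral_empirical_ofReal {Ω : Type*} {M : Type*} [MeasurableSpace M]
    (X : ℕ → Ω → M) {n : ℕ} (hn : 1 ≤ n) (ω : Ω) (f : M → ℝ) (hf : Measurable f)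
    (hf0 : ∀ y, 0 ≤ f y) :
    ∫⁻ y, ENNReal.ofReal (f y) ∂(empiricalMeasure X n ω)
      = ENNReal.ofReal ((n : ℝ)⁻¹ * ∑ i ∈ Finset.range n, f (X i ω)) := by
  have hg : Measurable fun y => ENNReal.ofReal (f y) := ENNReal.measurable_ofReal.comp hf
  rw [lintegral_empirical X n ω _ hg]
  have hnpos : (0 : ℝ) < (n : ℝ) := by exact_mod_cast hn
  rw [ENNReal.ofReal_mul (by positivity), ENNReal.ofReal_inv_of_pos hnpos,
    ENNReal.ofReal_natCast, ENNReal.ofReal_sum_of_nonneg (fun i _ => hf0 _)]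

lemma empirical_apply {Ω : Type*} {M : Type*} [MeasurableSpace M]
    (X : ℕ → Ω → M) {n : ℕ} (hn : 1 ≤ n) (ω : Ω) {s : Set M} (hs : MeasurableSet s) :
    empiricalMeasure X n ω s
      = ENNReal.ofReal ((n : ℝ)⁻¹
          * ∑ i ∈ Finset.range n, s.indicator (fun _ => (1:ℝ)) (X i ω)) := by
  have h1 : empiricalMeasure X n ω s = ∫⁻ y, s.indicator 1 y ∂(empiricalMeasure X n ω) :=
    (lintegral_indicator_one hs).symm
  rw [h1, ← lintegral_empirical_ofReal X hn ω _ (measurable_const.indicator hs)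
    (fun y => by by_cases hy : y ∈ s <;> simp [Set.indicator_of_mem, Set.indicator_of_notMem, hy])]
  congr 1
  funext y
  by_cases hy : y ∈ s <;>
    simp [Set.indicator_of_mem, Set.indicator_of_notMem, hy]

lemma empirical_isProbability {Ω : Type*} {M : Type*} [MeasurableSpace M]
    (X : ℕ → Ω → M) {n : ℕ} (hn : 1 ≤ n) (ω : Ω) :
    IsProbabilityMeasure (empiricalMeasure X n ω) := by
  constructor
  have h := lintegral_empirical X n ω (fun _ => 1) measurable_const
  rw [lintegral_one] at h
  simp only [Finset.sum_const, Finset.card_range, nsmul_eq_mul, mul_one] at h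
  rw [h]
  exact ENNReal.inv_mul_cancel (Nat.cast_ne_zero.2 (Nat.one_le_iff_ne_zero.1 hn))
    (ENNReal.natCast_ne_top n)

lemma empirical_integrable {Ω : Type*} {M : Type*} [MetricSpace M] [MeasurableSpace M]
    [OpensMeasurableSpace M] (X : ℕ → Ω → M) {n : ℕ} (hn : 1 ≤ n) (ω : Ω) (z : M) :
    Integrable (fun y => dist z y) (empiricalMeasure X n ω) := by
  rw [empiricalMeasure]
  apply Integrable.smul_measure _
    (by simp [Nat.one_le_iff_ne_zero.1 hn])
  rw [integrable_finset_sum_measure]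
  intro i _
  refine ⟨(continuous_const.dist continuous_id).measurable.aestronglyMeasurable, ?_⟩
  rw [HasFiniteIntegral]
  have hm : Measurable fun y : M => ‖dist z y‖ₑ :=
    (continuous_const.dist continuous_id).measurable.enorm
  rw [lintegral_dirac' _ hm]
  exact enorm_lt_top

end SLLN

/-- If P is Wasserstein sticky on a set S in a separable Hadamard space, then P
is sample sticky on S: for i.i.d. samples from P, almost surely there is a
random N such that the empirical Fréchet mean b(P_n) lies in S for all n ≥ N. -/
theorem wasserstein_sticky_implies_sample_sticky
    {M : Type*} [MetricSpace M] [HadamardSpace M] [TopologicalSpace.SeparableSpace M]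
    [MeasurableSpace M] [BorelSpace M]
    {Ω : Type*} [MeasureSpace Ω] [IsProbabilityMeasure (ℙ : Measure Ω)]
    (S : Set M)
    (b : Measure M → M)
    (hb : ∀ (R : Measure M), IsProbabilityMeasure R →
      (∀ z : M, Integrable (fun y => dist z y) R) →
      ∀ x : M, (1 / 2 : ℝ) * ∫ y, (dist (b R) y ^ 2 - dist (b R) y ^ 2) ∂ R ≤
        (1 / 2 : ℝ) * ∫ y, (dist x y ^ 2 - dist (b R) y ^ 2) ∂ R)
    (P : Measure M) [IsProbabilityMeasure P]
    (hP : ∀ z : M, Integrable (fun y => dist z y) P)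
    (hsticky : ∃ ε > (0:ℝ), ∀ (Q : Measure M), IsProbabilityMeasure Q →
      (∀ z : M, Integrable (fun y => dist z y) Q) → W1 P Q < ε → b Q ∈ S)
    (X : ℕ → Ω → M)
    (hmeas : ∀ i, Measurable (X i))
    (hindep : iIndepFun X ℙ)
    (hlaw : ∀ i, Measure.map (X i) ℙ = P) :
    ∀ᵐ ω ∂ℙ, ∃ N : ℕ, ∀ n ≥ N, b (empiricalMeasure X n ω) ∈ S := by
  classical
  obtain ⟨ε, hε, hstick⟩ := hsticky
  haveI hne : Nonempty M := by
    by_contra h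
    rw [not_nonempty_iff] at h
    have h1 := measure_univ (μ := P)
    rw [Set.univ_eq_empty_iff.2 h, measure_empty] at h1
    exact zero_ne_one h1
  haveI hsc : SecondCountableTopology M := UniformSpace.secondCountable_of_separable M
  set δ : ℝ := ε / 8 with hδdef
  have hδ : 0 < δ := by positivity
  set x₀ : M := hne.some with hx₀
  set q : ℕ → M := TopologicalSpace.denseSeq M with hqdef
  have hq : DenseRange q := TopologicalSpace.denseRange_denseSeq M
  have hedx : Measurable fun x : M => edist x x₀ :=
    (continuous_id.edist continuous_const).measurable
  have hfin : ∫⁻ x, edist x x₀ ∂P ≠ ∞ := by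
    have h2 := (hP x₀).2
    rw [HasFiniteIntegral] at h2
    have heq : ∫⁻ x, ‖dist x₀ x‖ₑ ∂P = ∫⁻ x, edist x x₀ ∂P := by
      apply lintegral_congr
      intro x
      rw [edist_dist, dist_comm, Real.enorm_eq_ofReal dist_nonneg]
    rw [heq] at h2
    exact h2.ne
  -- choice of J
  have hmono : Antitone fun J : ℕ => (bigU q δ J)ᶜ := by
    intro i j hij
    apply compl_subset_compl.2
    intro x hx
    rcases mem_iUnion₂.1 hx with ⟨k, hk, hxk⟩
    exact mem_biUnion (lt_of_lt_of_le hk hij) hxk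
  have hiInter : ⋂ J : ℕ, (bigU q δ J)ᶜ = (∅ : Set M) := by
    rw [eq_empty_iff_forall_notMem]
    intro x hx
    rcases Metric.denseRange_iff.1 hq x δ hδ with ⟨j, hj⟩
    have hxU : x ∈ bigU q δ (j + 1) :=
      mem_biUnion (Nat.lt_succ_self j) (Metric.mem_ball.2 hj)
    exact (mem_iInter.1 hx (j + 1)) hxU
  set ρm : Measure M := P.withDensity (fun x => edist x x₀) with hρm
  have hρs : ∀ s : Set M, MeasurableSet s → ρm s = ∫⁻ x in s, edist x x₀ ∂P :=
    fun s hs => withDensity_apply _ hs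
  have hρfin : ρm Set.univ ≠ ∞ := by
    rw [hρs Set.univ MeasurableSet.univ, Measure.restrict_univ]
    exact hfin
  have htendρ : Tendsto (fun J => ρm ((bigU q δ J)ᶜ)) atTop (𝓝 0) := by
    have h := tendsto_measure_iInter_atTop (μ := ρm)
      (fun J => measurableSet_bigU.compl.nullMeasurableSet) hmono
      ⟨0, ne_top_of_le_ne_top hρfin (measure_mono (subset_univ _))⟩
    rw [hiInter, measure_empty] at h
    exact h
  obtain ⟨J, hJ⟩ := (htendρ.eventually_lt_const (ENNReal.ofReal_pos.2 hδ)).exists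
  have htailP : ∫⁻ x in (bigU q δ J)ᶜ, edist x x₀ ∂P < ENNReal.ofReal δ := by
    rw [← hρs _ measurableSet_bigU.compl]
    exact hJ
  set Kr : ℝ := δ + ∑ j ∈ Finset.range J, dist (q j) x₀ with hKr
  have hKrpos : 0 < Kr := by
    have hs : 0 ≤ ∑ j ∈ Finset.range J, dist (q j) x₀ :=
      Finset.sum_nonneg fun i _ => dist_nonneg
    rw [hKr]
    linarith
  set δ'' : ℝ := δ / (2 * Kr) with hδ''def
  have hδ''pos : 0 < δ'' := by rw [hδ''def]; positivity
  -- tail function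
  set Z : M → ℝ := Set.indicator (bigU q δ J)ᶜ (fun y => dist x₀ y) with hZdef
  have hZmeas : Measurable Z :=
    ((continuous_const.dist continuous_id).measurable).indicator measurableSet_bigU.compl
  have hZnn : ∀ y, 0 ≤ Z y := fun y =>
    Set.indicator_nonneg (fun _ _ => dist_nonneg) y
  have hZint : Integrable Z P := (hP x₀).indicator measurableSet_bigU.compl
  have hZint_eq : ∫ x, Z x ∂P = (∫⁻ x in (bigU q δ J)ᶜ, edist x x₀ ∂P).toReal := by
    have hdm : Measurable fun y : M => dist x₀ y :=
      (continuous_const.dist continuous_id).measurable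
    rw [hZdef, integral_indicator measurableSet_bigU.compl,
      integral_eq_lintegral_of_nonneg_ae (Filter.Eventually.of_forall fun y => dist_nonneg)
      hdm.aestronglyMeasurable]
    congr 1
    apply lintegral_congr
    intro x
    rw [edist_dist, dist_comm]
  have hZlt : ∫ x, Z x ∂P < δ := by
    rw [hZint_eq]
    exact (ENNReal.lt_ofReal_iff_toReal_lt (htailP.trans_le le_top).ne).1 htailP
  -- SLLN events
  have hA : ∀ᵐ ω ∂ℙ, ∀ j : ℕ, j < J →
      Tendsto (fun n : ℕ => (n : ℝ)⁻¹ • ∑ i ∈ Finset.range n,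
        Set.indicator (cellC q δ j) (fun _ => (1:ℝ)) (X i ω)) atTop
        (𝓝 ((P (cellC q δ j)).toReal)) := by
    rw [ae_all_iff]
    intro j
    by_cases hj : j < J
    · have hfj : Measurable (Set.indicator (cellC q δ j) (fun _ => (1:ℝ))) :=
        measurable_const.indicator measurableSet_cellC
      have hintj : Integrable (Set.indicator (cellC q δ j) (fun _ => (1:ℝ))) P :=
        (integrable_const (1:ℝ)).indicator measurableSet_cellC
      have h := slln_comp X hmeas hindep P hlaw _ hfj hintj
      have hexp : ∫ x, Set.indicator (cellC q δ j) (fun _ => (1:ℝ)) x ∂P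
          = (P (cellC q δ j)).toReal := integral_indicator_one measurableSet_cellC
      rw [hexp] at h
      exact h.mono fun ω hω _ => hω
    · exact Filter.Eventually.of_forall fun ω h => absurd h hj
  have hB : ∀ᵐ ω ∂ℙ, Tendsto (fun n : ℕ => (n : ℝ)⁻¹ • ∑ i ∈ Finset.range n, Z (X i ω))
      atTop (𝓝 (∫ x, Z x ∂P)) := slln_comp X hmeas hindep P hlaw Z hZmeas hZint
  filter_upwards [hA, hB] with ω hω hωZ
  -- eventual closeness
  have hsumt : Tendsto (fun n : ℕ => ∑ j ∈ Finset.range J,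
      |((n : ℝ)⁻¹ • ∑ i ∈ Finset.range n,
          Set.indicator (cellC q δ j) (fun _ => (1:ℝ)) (X i ω))
        - (P (cellC q δ j)).toReal|) atTop (𝓝 0) := by
    have h : Tendsto (fun n : ℕ => ∑ j ∈ Finset.range J,
        |((n : ℝ)⁻¹ • ∑ i ∈ Finset.range n,
            Set.indicator (cellC q δ j) (fun _ => (1:ℝ)) (X i ω))
          - (P (cellC q δ j)).toReal|) atTop
        (𝓝 (∑ j ∈ Finset.range J,
          |(P (cellC q δ j)).toReal - (P (cellC q δ j)).toReal|)) := by
      apply tendsto_finset_sum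
      intro j hj
      exact ((hω j (Finset.mem_range.1 hj)).sub
        (tendsto_const_nhds (x := (P (cellC q δ j)).toReal))).abs
    simpa using h
  have E1 := hsumt.eventually_lt_const hδ''pos
  have E2 := hωZ.eventually_lt_const hZlt
  have E3 : ∀ᶠ n : ℕ in atTop, 1 ≤ n := eventually_ge_atTop 1
  obtain ⟨N, hN⟩ := eventually_atTop.1 (E1.and (E2.and E3))
  refine ⟨N, fun n hn => ?_⟩
  obtain ⟨h1, h2, h3⟩ := hN n hn
  haveI hprob : IsProbabilityMeasure (empiricalMeasure X n ω) :=
    empirical_isProbability X h3 ω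
  apply hstick _ hprob (fun z => empirical_integrable X h3 ω z)
  -- the W1 estimate
  have hW : W1 P (empiricalMeasure X n ω) ≤ 6 * δ := by
    apply coupling_W1_bound P (empiricalMeasure X n ω) x₀ q hδ J (by positivity)
    -- d-sum estimate
    have hd_le : ∑ j ∈ Finset.range J,
        ((P (cellC q δ j) - empiricalMeasure X n ω (cellC q δ j))
          + (empiricalMeasure X n ω (cellC q δ j) - P (cellC q δ j)))
        ≤ ENNReal.ofReal (2 * ∑ j ∈ Finset.range J,
            |((n : ℝ)⁻¹ • ∑ i ∈ Finset.range n,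
                Set.indicator (cellC q δ j) (fun _ => (1:ℝ)) (X i ω))
              - (P (cellC q δ j)).toReal|) := by
      rw [Finset.mul_sum, ENNReal.ofReal_sum_of_nonneg (fun j _ => by positivity)]
      apply Finset.sum_le_sum
      intro j hj
      set ar : ℝ := (P (cellC q δ j)).toReal with har
      set br : ℝ := (n : ℝ)⁻¹ • ∑ i ∈ Finset.range n,
        Set.indicator (cellC q δ j) (fun _ => (1:ℝ)) (X i ω) with hbr
      have hPa : P (cellC q δ j) = ENNReal.ofReal ar :=
        (ENNReal.ofReal_toReal (measure_ne_top _ _)).symm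
      have hbrnn : 0 ≤ br := by
        rw [hbr, smul_eq_mul]
        apply mul_nonneg (by positivity)
        exact Finset.sum_nonneg fun i _ =>
          Set.indicator_nonneg (fun _ _ => by norm_num) _
      have hνa : empiricalMeasure X n ω (cellC q δ j) = ENNReal.ofReal br := by
        rw [empirical_apply X h3 ω measurableSet_cellC, hbr, smul_eq_mul]
      rw [hPa, hνa]
      calc (ENNReal.ofReal ar - ENNReal.ofReal br)
            + (ENNReal.ofReal br - ENNReal.ofReal ar)
          = ENNReal.ofReal (ar - br) + ENNReal.ofReal (br - ar) := by
            rw [ENNReal.ofReal_sub _ hbrnn, ENNReal.ofReal_sub _ ENNReal.toReal_nonneg]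
        _ ≤ ENNReal.ofReal |br - ar| + ENNReal.ofReal |br - ar| := by
            apply add_le_add
            · apply ENNReal.ofReal_le_ofReal
              rw [abs_sub_comm]
              exact le_abs_self _
            · exact ENNReal.ofReal_le_ofReal (le_abs_self _)
        _ = ENNReal.ofReal (2 * |br - ar|) := by
            rw [two_mul, ENNReal.ofReal_add (abs_nonneg _) (abs_nonneg _)]
    have hKd : ENNReal.ofReal (δ + ∑ j ∈ Finset.range J, dist (q j) x₀)
        * ∑ j ∈ Finset.range J,
          ((P (cellC q δ j) - empiricalMeasure X n ω (cellC q δ j))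
            + (empiricalMeasure X n ω (cellC q δ j) - P (cellC q δ j)))
        ≤ ENNReal.ofReal δ := by
      calc ENNReal.ofReal (δ + ∑ j ∈ Finset.range J, dist (q j) x₀)
            * ∑ j ∈ Finset.range J,
              ((P (cellC q δ j) - empiricalMeasure X n ω (cellC q δ j))
                + (empiricalMeasure X n ω (cellC q δ j) - P (cellC q δ j)))
          ≤ ENNReal.ofReal Kr * ENNReal.ofReal (2 * ∑ j ∈ Finset.range J,
              |((n : ℝ)⁻¹ • ∑ i ∈ Finset.range n,
                  Set.indicator (cellC q δ j) (fun _ => (1:ℝ)) (X i ω))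
                - (P (cellC q δ j)).toReal|) := by
            rw [hKr]
            exact mul_le_mul_right hd_le _
        _ = ENNReal.ofReal (Kr * (2 * ∑ j ∈ Finset.range J,
              |((n : ℝ)⁻¹ • ∑ i ∈ Finset.range n,
                  Set.indicator (cellC q δ j) (fun _ => (1:ℝ)) (X i ω))
                - (P (cellC q δ j)).toReal|)) := by
            rw [ENNReal.ofReal_mul hKrpos.le]
        _ ≤ ENNReal.ofReal δ := by
            apply ENNReal.ofReal_le_ofReal
            have hlt := (lt_div_iff₀ (by positivity : (0:ℝ) < 2 * Kr)).1 (hδ''def ▸ h1)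
            nlinarith [Finset.sum_nonneg (fun j (_ : j ∈ Finset.range J) =>
              abs_nonneg (((n : ℝ)⁻¹ • ∑ i ∈ Finset.range n,
                Set.indicator (cellC q δ j) (fun _ => (1:ℝ)) (X i ω))
                  - (P (cellC q δ j)).toReal))]
    have htailν : ∫⁻ y in (bigU q δ J)ᶜ, edist x₀ y ∂(empiricalMeasure X n ω)
        ≤ ENNReal.ofReal δ := by
      have heq1 : ∫⁻ y in (bigU q δ J)ᶜ, edist x₀ y ∂(empiricalMeasure X n ω)
          = ∫⁻ y, ENNReal.ofReal (Z y) ∂(empiricalMeasure X n ω) := by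
        rw [← lintegral_indicator measurableSet_bigU.compl]
        apply lintegral_congr
        intro y
        by_cases hy : y ∈ (bigU q δ J)ᶜ
        · rw [Set.indicator_of_mem hy, hZdef, Set.indicator_of_mem hy, edist_dist]
        · rw [Set.indicator_of_notMem hy, hZdef, Set.indicator_of_notMem hy,
            ENNReal.ofReal_zero]
      rw [heq1, lintegral_empirical_ofReal X h3 ω Z hZmeas hZnn]
      apply ENNReal.ofReal_le_ofReal
      rw [← smul_eq_mul]
      exact h2.le
    calc ENNReal.ofReal (2 * δ)
          + 2 * (ENNReal.ofReal (δ + ∑ j ∈ Finset.range J, dist (q j) x₀)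
              * ∑ j ∈ Finset.range J,
                ((P (cellC q δ j) - empiricalMeasure X n ω (cellC q δ j))
                  + (empiricalMeasure X n ω (cellC q δ j) - P (cellC q δ j))))
          + (∫⁻ x in (bigU q δ J)ᶜ, edist x x₀ ∂P)
          + (∫⁻ y in (bigU q δ J)ᶜ, edist x₀ y ∂(empiricalMeasure X n ω))
        ≤ ENNReal.ofReal (2 * δ) + 2 * ENNReal.ofReal δ
          + ENNReal.ofReal δ + ENNReal.ofReal δ := by
          apply add_le_add
          apply add_le_add
          apply add_le_add le_rfl
          · exact mul_le_mul_right hKd 2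
          · exact htailP.le
          · exact htailν
      _ = ENNReal.ofReal (6 * δ) := by
          rw [two_mul (ENNReal.ofReal δ), ← ENNReal.ofReal_add hδ.le hδ.le,
            ← ENNReal.ofReal_add (by positivity : (0:ℝ) ≤ 2*δ) (by positivity : (0:ℝ) ≤ δ+δ),
            ← ENNReal.ofReal_add (by positivity : (0:ℝ) ≤ 2*δ+(δ+δ)) hδ.le,
            ← ENNReal.ofReal_add (by positivity : (0:ℝ) ≤ 2*δ+(δ+δ)+δ) hδ.le]
          congr 1
          ring
  calc W1 P (empiricalMeasure X n ω) ≤ 6 * δ := hW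
    _ < ε := by rw [hδdef]; linarith
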